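/- An earliest transiting occurrence h_i^e of a serial episode is a minimal occurrence if and only if either it is the last earliest transiting occurrence or h_i^e(v_N) < h_{i+1}^e(v_N). Moreover every minimal window of α is the window of some earliest transiting occurrence satisfying this condition. -/

import Mathlib

variable {A : Type}

/-- An occurrence of the (N+1)-node serial episode `α` in the event sequence
`E` (of length `n`): a strictly increasing index map matching the event-types. -/
def IsOcc (E : ℕ → A) (n : ℕ) {N : ℕ} (α : Fin (N+1) → A) (h : Fin (N+1) → ℕ) : Prop :=
  StrictMono h ∧ (∀ i, h i < n) ∧ (∀ i, E (h i) = α i)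

/-- Earliest transiting occurrence: each `h i.succ` is the least index after
`h i.castSucc` carrying event-type `α i.succ`. -/
def IsET (E : ℕ → A) (n : ℕ) {N : ℕ} (α : Fin (N+1) → A) (h : Fin (N+1) → ℕ) : Prop :=
  IsOcc E n α h ∧ ∀ (i : Fin N) (j : ℕ), h i.castSucc < j → E j = α i.succ → h i.succ ≤ j

/-- Lexicographic order on occurrences. -/
def OccLex {N : ℕ} (h1 h2 : Fin (N+1) → ℕ) : Prop :=
  ∃ i, (∀ k < i, h1 k = h2 k) ∧ h1 i < h2 i

/-- The window `[a, b]` contains an occurrence of `α`. -/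
def WindowHasOcc (E : ℕ → A) (n : ℕ) {N : ℕ} (α : Fin (N+1) → A) (a b : ℕ) : Prop :=
  ∃ h, IsOcc E n α h ∧ a ≤ h 0 ∧ h (Fin.last N) ≤ b

/-- `[a, b]` is a minimal window of `α`: it contains an occurrence and no
proper subwindow contains one. -/
def IsMinWindow (E : ℕ → A) (n : ℕ) {N : ℕ} (α : Fin (N+1) → A) (a b : ℕ) : Prop :=
  WindowHasOcc E n α a b ∧
    ∀ c d, a ≤ c → d ≤ b → (a < c ∨ d < b) → ¬ WindowHasOcc E n α c d

/-- A minimal occurrence: its window is a minimal window. -/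
def IsMinOcc (E : ℕ → A) (n : ℕ) {N : ℕ} (α : Fin (N+1) → A) (h : Fin (N+1) → ℕ) : Prop :=
  IsOcc E n α h ∧ IsMinWindow E n α (h 0) (h (Fin.last N))

/-- `h'` is the earliest transiting occurrence immediately following `h`
in the lexicographic enumeration of earliest transiting occurrences. -/
def NextET (E : ℕ → A) (n : ℕ) {N : ℕ} (α : Fin (N+1) → A) (h h' : Fin (N+1) → ℕ) : Prop :=
  IsET E n α h ∧ IsET E n α h' ∧ OccLex h h' ∧
    ¬ ∃ g, IsET E n α g ∧ OccLex h g ∧ OccLex g h'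

/-- `h1 <⋆ h2` are non-interleaved: `h2 (v_j) ≥ h1 (v_{j+1})` for all `j < N`. -/
def NonInterleaved {N : ℕ} (h1 h2 : Fin (N+1) → ℕ) : Prop :=
  ∀ i : Fin N, h1 i.succ ≤ h2 i.castSucc

/-- Non-overlapped occurrences: one ends strictly before the other begins. -/
def NonOverlapped {N : ℕ} (h1 h2 : Fin (N+1) → ℕ) : Prop :=
  h1 (Fin.last N) < h2 0 ∨ h2 (Fin.last N) < h1 0

lemma etLe (E : ℕ → A) (n : ℕ) {N : ℕ} (α : Fin (N+1) → A) {h g : Fin (N+1) → ℕ}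
    (hh : IsET E n α h) (hg : IsOcc E n α g) (h0 : h 0 ≤ g 0) : ∀ i, h i ≤ g i := by
  intro i
  induction i using Fin.induction with
  | zero => exact h0
  | succ i ih =>
    exact hh.2 i (g i.succ) (lt_of_le_of_lt ih (hg.1 (Fin.castSucc_lt_succ (i := i)))) (hg.2.2 i.succ)

lemma occLex_of_start_lt {N : ℕ} {h1 h2 : Fin (N+1) → ℕ} (h : h1 0 < h2 0) : OccLex h1 h2 :=
  ⟨0, fun k hk => absurd hk (by simp [Fin.lt_def]), h⟩

lemma start_lt_of_occLex (E : ℕ → A) (n : ℕ) {N : ℕ} (α : Fin (N+1) → A)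
    {h1 h2 : Fin (N+1) → ℕ} (h1ET : IsET E n α h1) (h2ET : IsET E n α h2)
    (hl : OccLex h1 h2) : h1 0 < h2 0 := by
  by_contra hc
  push_neg at hc
  have hle := etLe E n α h2ET h1ET.1 hc
  obtain ⟨i, _, hi⟩ := hl
  exact absurd hi (not_lt.2 (hle i))

open Fin.NatCast in
lemma etOfOcc (E : ℕ → A) (n : ℕ) {N : ℕ} (α : Fin (N+1) → A) {g : Fin (N+1) → ℕ}
    (hg : IsOcc E n α g) : ∃ k, IsET E n α k ∧ k 0 = g 0 ∧ ∀ i, k i ≤ g i := by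
  classical
  set f : ℕ → ℕ := fun m =>
    Nat.rec (g 0) (fun i fi => sInf {j | fi < j ∧ E j = α ((i+1 : ℕ) : Fin (N+1))}) m with hf
  have hcast : ∀ (m : ℕ) (hm : m < N+1), ((m : ℕ) : Fin (N+1)) = ⟨m, hm⟩ := by
    intro m hm
    exact Fin.ext (Fin.val_cast_of_lt hm)
  have main : ∀ m (hm : m < N+1), f m ≤ g ⟨m, hm⟩ ∧
      (∀ m', m = m' + 1 → f m' < f m ∧ E (f m) = α ⟨m, hm⟩) := by
    intro m
    induction m with
    | zero =>
      intro hm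
      exact ⟨le_of_eq rfl, fun m' hm' => by omega⟩
    | succ m ih =>
      intro hm
      have hm' : m < N+1 := Nat.lt_of_succ_lt hm
      have hgm := (ih hm').1
      have hmem : g ⟨m+1, hm⟩ ∈ {j | f m < j ∧ E j = α ((m+1 : ℕ) : Fin (N+1))} := by
        refine ⟨lt_of_le_of_lt hgm (hg.1 ?_), ?_⟩
        · exact Fin.mk_lt_mk.mpr (Nat.lt_succ_self m)
        · rw [hg.2.2, hcast (m+1) hm]
      have hfm1 : f (m+1) = sInf {j | f m < j ∧ E j = α ((m+1 : ℕ) : Fin (N+1))} := rfl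
      have hmem2 : f (m+1) ∈ {j | f m < j ∧ E j = α ((m+1 : ℕ) : Fin (N+1))} := by
        rw [hfm1]; exact Nat.sInf_mem ⟨_, hmem⟩
      refine ⟨hfm1 ▸ Nat.sInf_le hmem, fun m' hm'' => ⟨?_, ?_⟩⟩
      · have hmm : m' = m := by omega
        rw [hmm]; exact hmem2.1
      · rw [hmem2.2, hcast (m+1) hm]
  refine ⟨fun i => f i.val, ⟨⟨?_, ?_, ?_⟩, ?_⟩, rfl, ?_⟩
  · refine Fin.strictMono_iff_lt_succ.mpr fun i => ?_
    have := ((main (i.val+1) (by omega)).2 i.val rfl).1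
    simpa using this
  · intro i
    exact lt_of_le_of_lt (by simpa using (main i.val i.isLt).1) (hg.2.1 i)
  · intro i
    rcases Nat.eq_zero_or_pos i.val with h0 | hpos
    · have : i = 0 := Fin.ext h0
      subst this
      simpa [hf] using hg.2.2 0
    · obtain ⟨m, hm⟩ : ∃ m, i.val = m + 1 := ⟨i.val - 1, by omega⟩
      exact ((main i.val i.isLt).2 m hm).2
  · intro i j hij hEj
    have hsucc : f (i.val+1) = sInf {j | f i.val < j ∧ E j = α ((i.val+1 : ℕ) : Fin (N+1))} := rfl
    have hmemj : j ∈ {j | f i.val < j ∧ E j = α ((i.val+1 : ℕ) : Fin (N+1))} := by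
      refine ⟨by simpa using hij, ?_⟩
      rw [hEj, hcast (i.val+1) (by omega)]
      exact congrArg α (Fin.ext (Fin.val_succ i))
    show f i.succ.val ≤ j
    simp only [Fin.val_succ]
    exact hsucc ▸ Nat.sInf_le hmemj
  · intro i
    simpa using (main i.val i.isLt).1

lemma nextExists (E : ℕ → A) (n : ℕ) {N : ℕ} (α : Fin (N+1) → A)
    {h k : Fin (N+1) → ℕ} (hh : IsET E n α h) (hk : IsET E n α k) (hlt : h 0 < k 0) :
    ∃ h', NextET E n α h h' ∧ h' 0 ≤ k 0 := by
  classical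
  set S : Set ℕ := {s | ∃ g, IsET E n α g ∧ g 0 = s ∧ h 0 < s} with hS
  have hne : S.Nonempty := ⟨k 0, k, hk, rfl, hlt⟩
  obtain ⟨h', h'ET, h'0, hs⟩ := Nat.sInf_mem hne
  refine ⟨h', ⟨hh, h'ET, occLex_of_start_lt (h'0 ▸ hs), ?_⟩, h'0 ▸ Nat.sInf_le ⟨k, hk, rfl, hlt⟩⟩
  rintro ⟨g, hgET, hl1, hl2⟩
  have h1 : h 0 < g 0 := start_lt_of_occLex E n α hh hgET hl1
  have h2 : g 0 < h' 0 := start_lt_of_occLex E n α hgET h'ET hl2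
  have : sInf S ≤ g 0 := Nat.sInf_le ⟨g, hgET, rfl, h1⟩
  omega

theorem stmt3 (E : ℕ → A) (n : ℕ) {N : ℕ} (α : Fin (N+1) → A) :
    (∀ h, IsET E n α h →
      (IsMinOcc E n α h ↔
        ((¬ ∃ h', NextET E n α h h') ∨
          ∀ h', NextET E n α h h' → h (Fin.last N) < h' (Fin.last N)))) ∧
    (∀ a b, IsMinWindow E n α a b →
      ∃ h, IsET E n α h ∧ h 0 = a ∧ h (Fin.last N) = b ∧
        ∀ h', NextET E n α h h' → h (Fin.last N) < h' (Fin.last N)) := by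
  constructor
  · intro h hET
    constructor
    · intro hmin
      right
      intro h' hnext
      have h1 : h 0 < h' 0 := start_lt_of_occLex E n α hET hnext.2.1 hnext.2.2.1
      have hle : h (Fin.last N) ≤ h' (Fin.last N) := etLe E n α hET hnext.2.1.1 h1.le _
      rcases lt_or_eq_of_le hle with hlt | heq
      · exact hlt
      · exact absurd ⟨h', hnext.2.1.1, le_refl _, heq.symm.le⟩
          (hmin.2.2 (h' 0) (h (Fin.last N)) h1.le (le_refl _) (Or.inl h1))
    · intro hdisj
      refine ⟨hET.1, ⟨h, hET.1, le_refl _, le_refl _⟩, ?_⟩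
      rintro c d hac hdb hproper ⟨g, hgocc, hcg, hgd⟩
      have hg0 : h 0 ≤ g 0 := hac.trans hcg
      rcases eq_or_lt_of_le hg0 with heq | hlt
      · have hlast : h (Fin.last N) ≤ g (Fin.last N) := etLe E n α hET hgocc hg0 _
        have hd : h (Fin.last N) ≤ d := hlast.trans hgd
        have hc : h 0 < c := by rcases hproper with h1 | h2; exact h1; omega
        omega
      · obtain ⟨k, hkET, hk0, hkle⟩ := etOfOcc E n α hgocc
        obtain ⟨h', hnext, hh'k⟩ := nextExists E n α hET hkET (hk0 ▸ hlt)
        have hstrict : h (Fin.last N) < h' (Fin.last N) := by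
          rcases hdisj with hno | hall
          · exact absurd ⟨h', hnext⟩ hno
          · exact hall h' hnext
        have h'K : h' (Fin.last N) ≤ k (Fin.last N) := etLe E n α hnext.2.1 hkET.1 hh'k _
        have : k (Fin.last N) ≤ g (Fin.last N) := hkle _
        have : g (Fin.last N) ≤ d := hgd
        omega
  · intro a b hmin
    obtain ⟨g, hgocc, hag, hgb⟩ := hmin.1
    obtain ⟨k, hkET, hk0, hkle⟩ := etOfOcc E n α hgocc
    have hka : a ≤ k 0 := hk0 ▸ hag
    have hkb : k (Fin.last N) ≤ b := (hkle _).trans hgb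
    have hwk : WindowHasOcc E n α (k 0) (k (Fin.last N)) := ⟨k, hkET.1, le_refl _, le_refl _⟩
    have heq : k 0 = a ∧ k (Fin.last N) = b := by
      by_contra hc
      have : a < k 0 ∨ k (Fin.last N) < b := by omega
      exact hmin.2 (k 0) (k (Fin.last N)) hka hkb this hwk
    refine ⟨k, hkET, heq.1, heq.2, ?_⟩
    intro h' hnext
    have h1 : k 0 < h' 0 := start_lt_of_occLex E n α hkET hnext.2.1 hnext.2.2.1
    have hle : k (Fin.last N) ≤ h' (Fin.last N) := etLe E n α hkET hnext.2.1.1 h1.le _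
    rcases lt_or_eq_of_le hle with hlt | heq2
    · exact hlt
    · exfalso
      refine hmin.2 (h' 0) b (heq.1 ▸ h1.le) (le_refl _) (Or.inl (heq.1 ▸ h1)) ?_
      exact ⟨h', hnext.2.1.1, le_refl _, by rw [← heq2, heq.2]⟩
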